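/- Let a_k, β_k, P_k, w_k > 0 for k = 1,…,K and let s₀ = 1/(1 + Σ_j β_j P_j). If (1/(1+Σ_j β_j P_j)) Σ_j β_j P_j · w_j/(1/a_j + β_j P_j s₀) ≤ min_k w_k/(1/a_k + β_k P_k s₀), then x_k = β_k P_k s₀ for all k (i.e., every user transmitting at full data power p_k = P_k) is a global maximizer of Σ_k w_k log₂(1 + a_k β_k p_k/(1 + Σ_j β_j p_j)) over 0 ≤ p_k ≤ P_k. -/

import Mathlib

/-- Full-power optimality condition for sum-SE maximization with MRC: with
`s₀ = 1/(1 + Σ β_j P_j)`, if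
`s₀ Σ_j β_j P_j w_j/(1/a_j + β_j P_j s₀) ≤ w_k/(1/a_k + β_k P_k s₀)` for every `k`, then
every user transmitting at full power `p_k = P_k` globally maximizes
`Σ w_k log₂(1 + a_k β_k p_k/(1 + Σ β_j p_j))` over `0 ≤ p_k ≤ P_k`. -/
theorem full_power_optimal (K : ℕ) (a β P w : Fin K → ℝ)
    (ha : ∀ k, 0 < a k) (hβ : ∀ k, 0 < β k) (hP : ∀ k, 0 < P k) (hw : ∀ k, 0 < w k)
    (hcond : ∀ k, (1 / (1 + ∑ j, β j * P j)) *
        (∑ j, β j * P j * (w j / (1 / a j + β j * P j * (1 / (1 + ∑ i, β i * P i))))) ≤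
      w k / (1 / a k + β k * P k * (1 / (1 + ∑ i, β i * P i)))) :
    ∀ p : Fin K → ℝ, (∀ k, 0 ≤ p k ∧ p k ≤ P k) →
      (∑ k, w k * Real.logb 2 (1 + a k * (β k * p k / (1 + ∑ j, β j * p j)))) ≤
        ∑ k, w k * Real.logb 2 (1 + a k * (β k * P k / (1 + ∑ j, β j * P j))) := by
  intro p hp
  have hlog2 : (0:ℝ) < Real.log 2 := Real.log_pos one_lt_two
  have hBpos : ∀ k, 0 < β k * P k := fun k => mul_pos (hβ k) (hP k)
  have hbnn : ∀ k, 0 ≤ β k * p k := fun k => mul_nonneg (hβ k).le (hp k).1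
  have hble : ∀ k, β k * p k ≤ β k * P k := fun k =>
    mul_le_mul_of_nonneg_left (hp k).2 (hβ k).le
  have hSnn : 0 ≤ ∑ j, β j * P j := Finset.sum_nonneg fun j _ => (hBpos j).le
  have hTnn : 0 ≤ ∑ j, β j * p j := Finset.sum_nonneg fun j _ => hbnn j
  set S := ∑ j, β j * P j with hS
  set T := ∑ j, β j * p j with hT
  have hD : (0:ℝ) < 1 + S := by linarith
  have hd : (0:ℝ) < 1 + T := by linarith
  set c : Fin K → ℝ := fun k => w k / (1 / a k + β k * P k * (1 / (1 + S))) with hc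
  set ν : ℝ := (1 / (1 + S)) * ∑ j, β j * P j * c j with hν
  have hcond' : ∀ k, ν ≤ c k := by
    intro k
    simp only [hν, hc]
    exact hcond k
  -- the identity ∑ c_k β_k P_k = ν (1+S)
  have hsumc : ∑ k, c k * (β k * P k) = ν * (1 + S) := by
    have : ∑ k, c k * (β k * P k) = ∑ k, β k * P k * c k :=
      Finset.sum_congr rfl fun k _ => mul_comm _ _
    rw [this, hν]
    field_simp
  -- Step B : the linearized inequality
  have hB : ∑ k, c k * (β k * p k / (1 + T) - β k * P k / (1 + S)) ≤ 0 := by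
    have e : ∀ k ∈ Finset.univ, c k * (β k * p k / (1 + T) - β k * P k / (1 + S)) =
        c k * (β k * p k) / (1 + T) - c k * (β k * P k) / (1 + S) := fun k _ => by ring
    rw [Finset.sum_congr rfl e, Finset.sum_sub_distrib, ← Finset.sum_div, ← Finset.sum_div,
      hsumc]
    have h2 : ν * (1 + S) / (1 + S) = ν := by field_simp
    rw [h2, sub_nonpos, div_le_iff₀ hd]
    -- ∑ c_k β_k p_k ≤ ν (1 + T)
    calc ∑ k, c k * (β k * p k)
        = ∑ k, ((c k - ν) * (β k * p k) + ν * (β k * p k)) :=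
          Finset.sum_congr rfl fun k _ => by ring
      _ ≤ ∑ k, ((c k - ν) * (β k * P k) + ν * (β k * p k)) :=
          Finset.sum_le_sum fun k _ => add_le_add_left
            (mul_le_mul_of_nonneg_left (hble k) (sub_nonneg.mpr (hcond' k))) _
      _ = (∑ k, c k * (β k * P k)) - ν * S + ν * T := by
          rw [Finset.sum_add_distrib]
          simp only [sub_mul]
          rw [Finset.sum_sub_distrib, ← Finset.mul_sum, ← Finset.mul_sum, ← hS, ← hT]
      _ = ν * (1 + T) := by rw [hsumc]; ring
  -- Step A : per-user concavity bound
  have hA : ∀ k ∈ Finset.univ, w k * Real.logb 2 (1 + a k * (β k * p k / (1 + T))) ≤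
      w k * Real.logb 2 (1 + a k * (β k * P k / (1 + S))) +
        c k * (β k * p k / (1 + T) - β k * P k / (1 + S)) / Real.log 2 := by
    intro k _
    set x := β k * p k / (1 + T) with hx
    set X := β k * P k / (1 + S) with hX
    clear_value x X
    have hxnn : 0 ≤ x := hx ▸ div_nonneg (hbnn k) hd.le
    have hXpos : 0 < X := hX ▸ div_pos (hBpos k) hD
    have hu : 0 < 1 + a k * x := by nlinarith [ha k]
    have hv : 0 < 1 + a k * X := by nlinarith [ha k]
    have hlog : Real.log (1 + a k * x) - Real.log (1 + a k * X) ≤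
        ((1 + a k * x) - (1 + a k * X)) / (1 + a k * X) := by
      rw [← Real.log_div hu.ne' hv.ne']
      calc Real.log ((1 + a k * x) / (1 + a k * X))
          ≤ (1 + a k * x) / (1 + a k * X) - 1 :=
            Real.log_le_sub_one_of_pos (div_pos hu hv)
        _ = ((1 + a k * x) - (1 + a k * X)) / (1 + a k * X) := by field_simp
    have hden : 0 < 1 / a k + β k * P k * (1 / (1 + S)) := by
      have h1 : 0 < 1 / a k := one_div_pos.mpr (ha k)
      have h2 : 0 < β k * P k * (1 / (1 + S)) := mul_pos (hBpos k) (one_div_pos.mpr hD)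
      linarith
    have hv' : 0 < 1 + a k * (β k * P k / (1 + S)) := hX ▸ hv
    have hc2 : c k = w k * a k / (1 + a k * X) := by
      simp only [hc, hX]
      rw [div_eq_div_iff hden.ne' hv'.ne']
      have hak : a k ≠ 0 := (ha k).ne'
      field_simp
    have hid : c k * (x - X) = w k * (((1 + a k * x) - (1 + a k * X)) / (1 + a k * X)) := by
      rw [hc2]
      field_simp
      ring
    have hcore : w k * Real.log (1 + a k * x) ≤
        w k * Real.log (1 + a k * X) + c k * (x - X) := by
      have h := mul_le_mul_of_nonneg_left hlog (hw k).le
      rw [hid]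
      nlinarith [h]
    simp only [Real.logb]
    calc w k * (Real.log (1 + a k * x) / Real.log 2)
        = (w k * Real.log (1 + a k * x)) / Real.log 2 := by ring
      _ ≤ (w k * Real.log (1 + a k * X) + c k * (x - X)) / Real.log 2 :=
          div_le_div_of_nonneg_right hcore hlog2.le
      _ = w k * (Real.log (1 + a k * X) / Real.log 2) +
          c k * (x - X) / Real.log 2 := by ring
  calc ∑ k, w k * Real.logb 2 (1 + a k * (β k * p k / (1 + T)))
      ≤ ∑ k, (w k * Real.logb 2 (1 + a k * (β k * P k / (1 + S))) +
          c k * (β k * p k / (1 + T) - β k * P k / (1 + S)) / Real.log 2) :=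
        Finset.sum_le_sum hA
    _ = (∑ k, w k * Real.logb 2 (1 + a k * (β k * P k / (1 + S)))) +
          (∑ k, c k * (β k * p k / (1 + T) - β k * P k / (1 + S))) / Real.log 2 := by
        rw [Finset.sum_add_distrib, Finset.sum_div]
    _ ≤ ∑ k, w k * Real.logb 2 (1 + a k * (β k * P k / (1 + S))) := by
        have : (∑ k, c k * (β k * p k / (1 + T) - β k * P k / (1 + S))) / Real.log 2 ≤ 0 :=
          div_nonpos_of_nonpos_of_nonneg hB hlog2.le
        linarith
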